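/- Let K be an infinite lattice semiring with an ε-bounded probability measure p on K⁺. Then for every fixed k, every finite relational vocabulary τ, and every p-relevant δ, the probability under μ_{n,p} that a random K-interpretation on [n] has the (k,δ)-extension property converges to 1 as n → ∞, and the convergence is exponentially fast. -/

import Mathlib

open MeasureTheory Filter Set
open scoped ENNReal BigOperators

/-- A (fully instantiated) literal over the relational vocabulary given by the
relation symbols `R` with arities `ar`, on the universe `A`: a relation symbol,
a tuple of arguments, and a polarity (`true` = positive atom, `false` = negated atom). -/
structure Lit (R : Type) (ar : R → ℕ) (A : Type) : Type where
  rel : R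
  args : Fin (ar rel) → A
  pos : Bool

/-- A (fully instantiated) relational atom. -/
abbrev Atoms (R : Type) (ar : R → ℕ) (A : Type) : Type := (r : R) × (Fin (ar r) → A)

variable {R : Type} {ar : R → ℕ} {A B K : Type}

/-- Renaming of a literal along a map of universes. -/
def Lit.map (f : A → B) (l : Lit R ar A) : Lit R ar B :=
  ⟨l.rel, fun j => f (l.args j), l.pos⟩

/-- A `K`-interpretation (or atomic type) is model-defining / consistent (w.r.t. the
zero element `z` of `K`) if out of each pair of complementary literals exactly one is
mapped to `z`. -/
def ModelDefining (z : K) (π : Lit R ar A → K) : Prop :=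
  ∀ (r : R) (as : Fin (ar r) → A), (π ⟨r, as, true⟩ = z ↔ π ⟨r, as, false⟩ ≠ z)

/-- The atomic `m`-type realised by the tuple `a` in the interpretation `π`. -/
def typeOf {m : ℕ} (π : Lit R ar A → K) (a : Fin m → A) : Lit R ar (Fin m) → K :=
  fun l => π (l.map a)

/-- The tuple `a` (of pairwise distinct elements) realises the atomic `m`-type `ρ` in `π`. -/
def Realizes {m : ℕ} (π : Lit R ar A → K) (a : Fin m → A) (ρ : Lit R ar (Fin m) → K) : Prop :=
  Function.Injective a ∧ typeOf π a = ρ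

/-- The atomic `(m+1)`-type `ρp` extends the atomic `m`-type `ρ`. -/
def Extends {m : ℕ} (ρp : Lit R ar (Fin (m+1)) → K) (ρ : Lit R ar (Fin m) → K) : Prop :=
  ∀ l : Lit R ar (Fin m), ρp (l.map Fin.castSucc) = ρ l

/-- The `k`-extension property of an interpretation `π` (with zero element `z`). -/
def ExtProp (z : K) (π : Lit R ar A → K) (k : ℕ) : Prop :=
  ∀ m, m < k → ∀ ρ : Lit R ar (Fin m) → K, ModelDefining z ρ →
    ∀ ρp : Lit R ar (Fin (m+1)) → K, ModelDefining z ρp → Extends ρp ρ →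
      ∀ a : Fin m → A, Realizes π a ρ →
        ∃ b : A, b ∉ Set.range a ∧ Realizes π (Fin.snoc a b) ρp

/-- A sequence of extended nonnegative reals converges to `L` exponentially fast. -/
def ExpConv (f : ℕ → ℝ≥0∞) (L : ℝ≥0∞) : Prop :=
  ∃ C q : ℝ≥0∞, C ≠ ⊤ ∧ q < 1 ∧ ∀ n, f n ≤ L + C * q ^ n ∧ L ≤ f n + C * q ^ n

/-- The interpretation determined by a sample point: each atom gets a pair
(value of positive literal, value of negated literal). -/
def interpOf (ω : Atoms R ar A → K × K) : Lit R ar A → K :=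
  fun l => if l.pos then (ω ⟨l.rel, l.args⟩).1 else (ω ⟨l.rel, l.args⟩).2

/-- The per-atom distribution: with probability 1/2 the atom is true (its negation
gets value `z`, i.e. false, and its value is sampled from `p`), with probability 1/2
it is false (symmetrically). -/
noncomputable def atomMeasure [MeasurableSpace K] (z : K) (p : Measure K) : Measure (K × K) :=
  (2⁻¹ : ℝ≥0∞) • (Measure.map (fun j => (j, z)) p + Measure.map (fun j => (z, j)) p)

/-- The distribution `μ_{n,p}` of random `K`-interpretations on universe `[n]`,
presented on the sample space assigning to each atom the pair of values of its
positive and negated literal. -/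
noncomputable def muI [MeasurableSpace K] [Fintype R] (z : K) (p : Measure K) (n : ℕ) :
    Measure (Atoms R ar (Fin n) → K × K) :=
  Measure.pi fun _ => atomMeasure z p
/-- The smallest positive element `ε_K = ⨅ {j ∈ K : j ≠ 0}` of a finite lattice semiring. -/
noncomputable def epsK (K : Type) [DistribLattice K] [BoundedOrder K] [Fintype K]
    [DecidableEq K] : K :=
  (Finset.univ.filter fun j : K => j ≠ ⊥).inf id

/-- A literal over the variables `x_1, …, x_{m+1}` containing the new variable `x_{m+1}`. -/
def NewLit {m : ℕ} (l : Lit R ar (Fin (m+1))) : Prop := ∃ j, l.args j = Fin.last m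

/-- `ρp` is a maximal extension of `ρ`: all new literals get values in `{0,1} = {⊥,⊤}`. -/
def MaxExt [Lattice K] [BoundedOrder K] {m : ℕ}
    (ρp : Lit R ar (Fin (m+1)) → K) (ρ : Lit R ar (Fin m) → K) : Prop :=
  Extends ρp ρ ∧ ∀ l : Lit R ar (Fin (m+1)), NewLit l → (ρp l = ⊥ ∨ ρp l = ⊤)

/-- `ρm` is a `δ`-small extension of `ρ`: all new literals get values `≤ δ`. -/
def SmallExt [Lattice K] [BoundedOrder K] {m : ℕ} (δ : K)
    (ρm : Lit R ar (Fin (m+1)) → K) (ρ : Lit R ar (Fin m) → K) : Prop :=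
  Extends ρm ρ ∧ ∀ l : Lit R ar (Fin (m+1)), NewLit l → ρm l ≤ δ

/-- The `(k,δ)`-extension property: every maximal extension of the type of a tuple is
realised, and also some `δ`-small extension below it is realised. -/
def ExtPropKD [Lattice K] [BoundedOrder K] (π : Lit R ar A → K) (k : ℕ) (δ : K) : Prop :=
  ∀ m, m < k → ∀ a : Fin m → A, Function.Injective a →
    ∀ ρp : Lit R ar (Fin (m+1)) → K, ModelDefining ⊥ ρp → MaxExt ρp (typeOf π a) →
      (∃ b : A, b ∉ Set.range a ∧ typeOf π (Fin.snoc a b) = ρp) ∧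
      (∃ c : A, c ∉ Set.range a ∧ ModelDefining ⊥ (typeOf π (Fin.snoc a c)) ∧
        typeOf π (Fin.snoc a c) ≤ ρp ∧ SmallExt δ (typeOf π (Fin.snoc a c)) (typeOf π a))

/-- `p` is weakly `ε`-bounded. -/
def WeaklyBounded [Lattice K] [BoundedOrder K] [MeasurableSpace K]
    (p : Measure K) (ε : K) : Prop :=
  0 < p {ε} ∧ ∀ δ : K, δ ≠ ⊥ → ¬ ε ≤ δ → p {x : K | ⊥ < x ∧ x ≤ δ} = 0

/-- `p` is strictly `ε`-bounded. -/
def StrictlyBounded [Lattice K] [BoundedOrder K] [MeasurableSpace K]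
    (p : Measure K) (ε : K) : Prop :=
  (∀ ε' : K, ¬ WeaklyBounded p ε') ∧ p {x : K | ⊥ < x ∧ x ≤ ε} = 0 ∧
    ∀ δ : K, ε < δ → 0 < p {x : K | ⊥ < x ∧ x ≤ δ}

/-- `p` is `ε`-bounded on small semiring values. -/
def EpsBounded [Lattice K] [BoundedOrder K] [MeasurableSpace K]
    (p : Measure K) (ε : K) : Prop :=
  WeaklyBounded p ε ∨ StrictlyBounded p ε

/-- `δ ∈ K⁺` is `p`-relevant (w.r.t. the parameter `ε` of the `ε`-bounded measure `p`). -/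
def PRelevant [Lattice K] [BoundedOrder K] [MeasurableSpace K]
    (p : Measure K) (ε δ : K) : Prop :=
  δ ≠ ⊥ ∧ (ε < δ ∨ (0 < p {ε} ∧ δ = ε))

/-- An interval of `K`: a closed, open, or half-open order interval. -/
def IsInterval [Lattice K] (J : Set K) : Prop :=
  ∃ a b : K, J = Set.Icc a b ∨ J = Set.Ico a b ∨ J = Set.Ioc a b ∨ J = Set.Ioo a b

open scoped NNReal

section AuxMeasure

lemma map_grouped_pi {I J T : Type} [Fintype I] [Fintype J] [Fintype T]
    {X : Type} [MeasurableSpace X]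
    (ν : Measure X) [IsProbabilityMeasure ν] (g : J → T → I)
    (hg : ∀ ⦃j t j' t'⦄, g j t = g j' t' → j = j' ∧ t = t') :
    Measure.map (fun (ω : I → X) (j : J) (t : T) => ω (g j t)) (Measure.pi fun _ : I => ν)
      = Measure.pi fun _ : J => Measure.pi fun _ : T => ν := by
  classical
  have hΦ : Measurable (fun (ω : I → X) (j : J) (t : T) => ω (g j t)) :=
    measurable_pi_lambda _ fun j => measurable_pi_lambda _ fun t => measurable_pi_apply _
  have hgJT : Function.Injective (fun jt : J × T => g jt.1 jt.2) := by
    rintro ⟨j, t⟩ ⟨j', t'⟩ h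
    obtain ⟨h1, h2⟩ := hg h
    exact Prod.ext h1 h2
  refine (Measure.pi_eq_generateFrom
    (C := fun _ => Set.pi univ '' Set.pi univ fun _ : T => {s : Set X | MeasurableSet s})
    (fun _ => generateFrom_pi) (fun _ => isPiSystem_pi) (fun _ => ?_) ?_).symm
  · exact ⟨fun _ => univ, fun _ => ⟨fun _ => univ, fun _ _ => MeasurableSet.univ, by simp⟩,
      fun _ => measure_lt_top _ _, iUnion_const _⟩
  · intro s hs
    choose f hf heq using hs
    have hfm : ∀ (j : J) (t : T), MeasurableSet (f j t) := fun j t => hf j t (mem_univ t)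
    have hsm : ∀ j, MeasurableSet (s j) := fun j => (heq j) ▸ MeasurableSet.univ_pi fun t => hfm j t
    have choose_eq : ∀ (j : J) (t : T) (h : ∃ jt : J × T, g jt.1 jt.2 = g j t),
        h.choose = (j, t) := by
      intro j t h
      obtain ⟨h1, h2⟩ := hg h.choose_spec
      exact Prod.ext h1 h2
    have hpre : (fun (ω : I → X) (j : J) (t : T) => ω (g j t)) ⁻¹' (univ.pi s)
        = univ.pi (fun i => if h : ∃ jt : J × T, g jt.1 jt.2 = i
            then f h.choose.1 h.choose.2 else univ) := by
      ext ω
      simp only [mem_preimage, mem_univ_pi]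
      constructor
      · intro h i
        split_ifs with hex
        · obtain ⟨⟨j, t⟩, hjt⟩ := id hex
          have := h j
          rw [← heq j, mem_univ_pi] at this
          have h2 := this (hex.choose.2)
          have h3 : g hex.choose.1 hex.choose.2 = i := hex.choose_spec
          -- need : ω i ∈ f hex.choose.1 hex.choose.2
          have := h hex.choose.1
          rw [← heq hex.choose.1, mem_univ_pi] at this
          have h4 := this hex.choose.2
          rwa [h3] at h4
        · exact mem_univ _
      · intro h j
        rw [← heq j, mem_univ_pi]
        intro t
        have := h (g j t)
        rw [dif_pos ⟨(j, t), rfl⟩] at this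
        rwa [choose_eq j t ⟨(j, t), rfl⟩] at this
    rw [Measure.map_apply hΦ (MeasurableSet.univ_pi hsm), hpre, Measure.pi_pi]
    have : ∀ j, (Measure.pi fun _ : T => ν) (s j) = ∏ t, ν (f j t) := by
      intro j; rw [← heq j, Measure.pi_pi]
    simp_rw [this]
    rw [← Finset.prod_product']
    calc ∏ i : I, ν (if h : ∃ jt : J × T, g jt.1 jt.2 = i
            then f h.choose.1 h.choose.2 else univ)
        = ∏ i ∈ Finset.image (fun jt : J × T => g jt.1 jt.2) (Finset.univ ×ˢ Finset.univ),
            ν (if h : ∃ jt : J × T, g jt.1 jt.2 = i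
            then f h.choose.1 h.choose.2 else univ) := by
          refine (Finset.prod_subset (Finset.subset_univ _) ?_).symm
          intro i _ hi
          rw [dif_neg, measure_univ]
          rintro ⟨jt, rfl⟩
          exact hi (Finset.mem_image.2 ⟨jt, Finset.mem_product.2 ⟨Finset.mem_univ _,
            Finset.mem_univ _⟩, rfl⟩)
      _ = ∏ jt ∈ Finset.univ ×ˢ Finset.univ, ν (if h : ∃ jt' : J × T, g jt'.1 jt'.2 = g jt.1 jt.2
            then f h.choose.1 h.choose.2 else univ) :=
          Finset.prod_image (fun x _ y _ h => hgJT h)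
      _ = ∏ x ∈ Finset.univ ×ˢ Finset.univ, ν (f x.1 x.2) := by
          refine Finset.prod_congr rfl fun jt _ => ?_
          rw [dif_pos ⟨jt, rfl⟩, choose_eq jt.1 jt.2]

lemma pi_forall_exists_measure {I J T : Type} [Fintype I] [Fintype J] [Fintype T]
    {X : Type} [MeasurableSpace X] (ν : Measure X) [IsProbabilityMeasure ν]
    (g : J → T → I) (hg : ∀ ⦃j t j' t'⦄, g j t = g j' t' → j = j' ∧ t = t')
    (S : T → Set X) (hS : ∀ t, MeasurableSet (S t)) :
    (Measure.pi fun _ : I => ν) {ω | ∀ j : J, ∃ t : T, ω (g j t) ∉ S t}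
      = (1 - ∏ t, ν (S t)) ^ Fintype.card J := by
  have hΦ : Measurable (fun (ω : I → X) (j : J) (t : T) => ω (g j t)) :=
    measurable_pi_lambda _ fun j => measurable_pi_lambda _ fun t => measurable_pi_apply _
  have hbox : MeasurableSet ((univ.pi S)ᶜ : Set (T → X)) := (MeasurableSet.univ_pi hS).compl
  have hset : {ω : I → X | ∀ j, ∃ t, ω (g j t) ∉ S t}
      = (fun (ω : I → X) (j : J) (t : T) => ω (g j t)) ⁻¹'
          (univ.pi fun _ : J => (univ.pi S)ᶜ) := by
    ext ω
    simp only [mem_setOf_eq, mem_preimage, mem_univ_pi, mem_compl_iff, not_forall]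
  have hcompl : (Measure.pi fun _ : T => ν) ((univ.pi S)ᶜ) = 1 - ∏ t, ν (S t) := by
    rw [prob_compl_eq_one_sub (MeasurableSet.univ_pi hS), Measure.pi_pi]
  rw [hset, ← Measure.map_apply hΦ (MeasurableSet.univ_pi fun _ => hbox),
     map_grouped_pi ν g hg, Measure.pi_pi]
  simp [hcompl, Finset.prod_const, Finset.card_univ]

lemma exists_geom_bound (D : ℝ≥0∞) (hD : D ≠ ⊤) (r : ℝ≥0∞) (hr : r < 1) (k : ℕ) :
    ∃ C q : ℝ≥0∞, C ≠ ⊤ ∧ 1 ≤ C ∧ q < 1 ∧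
      ∀ n : ℕ, D * (n : ℝ≥0∞) ^ k * r ^ (n - k) ≤ C * q ^ n := by
  set r' : ℝ≥0 := r.toNNReal with hr'
  set D' : ℝ≥0 := D.toNNReal with hD'
  have hrc : r = (r' : ℝ≥0∞) := (ENNReal.coe_toNNReal (hr.trans ENNReal.one_lt_top).ne).symm
  have hDc : D = (D' : ℝ≥0∞) := (ENNReal.coe_toNNReal hD).symm
  have hr1 : r' < 1 := by
    rw [hrc] at hr; exact_mod_cast hr
  set s : ℝ≥0 := max r' 2⁻¹ with hs
  have hs1 : s < 1 := max_lt hr1 (by rw [← NNReal.coe_lt_coe]; norm_num)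
  have hs0 : 0 < s := lt_of_lt_of_le (by norm_num) (le_max_right _ _)
  set q' : ℝ≥0 := (s + 1) / 2 with hq'
  have hsq : s < q' := by
    rw [hq', lt_div_iff₀ (by norm_num)]
    calc s * 2 = s + s := by ring
    _ < s + 1 := by exact add_lt_add_right hs1 s
  have hq1 : q' < 1 := by
    rw [hq', div_lt_iff₀ (by norm_num)]
    calc s + 1 < 1 + 1 := add_lt_add_left hs1 1
    _ = 1 * 2 := by ring
  have hq0 : 0 < q' := hs0.trans hsq
  set x : ℝ≥0 := s / q' with hx
  have hx1 : x < 1 := by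
    rw [hx, div_lt_iff₀ hq0]
    simpa using hsq
  have htend : Filter.Tendsto (fun n : ℕ => (n : ℝ) ^ k * (x : ℝ) ^ n) atTop (nhds 0) :=
    tendsto_pow_const_mul_const_pow_of_lt_one k x.coe_nonneg (by exact_mod_cast hx1)
  obtain ⟨Creal, hC⟩ := htend.bddAbove_range
  set C1 : ℝ≥0 := Real.toNNReal Creal with hC1
  have key : ∀ n : ℕ, (n : ℝ≥0) ^ k * x ^ n ≤ C1 := by
    intro n
    have h1 : (n : ℝ) ^ k * (x : ℝ) ^ n ≤ Creal := hC (Set.mem_range_self n)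
    have h2 : Creal ≤ (C1 : ℝ) := Real.le_coe_toNNReal Creal
    rw [← NNReal.coe_le_coe]
    push_cast
    exact h1.trans h2
  refine ⟨(max (D' * (s ^ k)⁻¹ * C1) 1 : ℝ≥0), (q' : ℝ≥0∞), ENNReal.coe_ne_top, ?_, ?_, ?_⟩
  · exact_mod_cast le_max_right _ _
  · exact_mod_cast hq1
  intro n
  rw [hrc, hDc]
  have hnn : ((n : ℕ) : ℝ≥0∞) = ((n : ℝ≥0) : ℝ≥0∞) := by push_cast; rfl
  rw [hnn, ← ENNReal.coe_pow, ← ENNReal.coe_mul, ← ENNReal.coe_pow, ← ENNReal.coe_mul,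
    ← ENNReal.coe_pow, ← ENNReal.coe_mul]
  rw [ENNReal.coe_le_coe]
  -- now all in ℝ≥0
  have hrs : r' ≤ s := le_max_left _ _
  have step1 : r' ^ (n - k) ≤ s ^ n * (s ^ k)⁻¹ := by
    have h1 : r' ^ (n - k) ≤ s ^ (n - k) := pow_le_pow_left₀ zero_le' hrs _
    have h2 : s ^ (n - k) * s ^ k ≤ s ^ n := by
      rw [← pow_add]
      exact pow_le_pow_right_of_le_one' hs1.le (by omega)
    have h3 : s ^ (n - k) ≤ s ^ n * (s ^ k)⁻¹ := by
      rw [← div_eq_mul_inv, le_div_iff₀ (pow_pos hs0 _)]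
      exact h2
    exact h1.trans h3
  have step2 : s ^ n = x ^ n * q' ^ n := by
    rw [← mul_pow, hx, div_mul_cancel₀ _ hq0.ne']
  calc D' * (n : ℝ≥0) ^ k * r' ^ (n - k)
      ≤ D' * (n : ℝ≥0) ^ k * (s ^ n * (s ^ k)⁻¹) := by
        exact mul_le_mul_right step1 _
    _ = (D' * (s ^ k)⁻¹) * ((n : ℝ≥0) ^ k * x ^ n) * q' ^ n := by
        rw [step2]; ring
    _ ≤ (D' * (s ^ k)⁻¹) * C1 * q' ^ n := by
        exact mul_le_mul_left (mul_le_mul_right (key n) _) _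
    _ ≤ max (D' * (s ^ k)⁻¹ * C1) 1 * q' ^ n := by
        exact mul_le_mul_left (le_max_left _ _) _

end AuxMeasure

section Domain

variable {R : Type} [Fintype R] [DecidableEq R] {ar : R → ℕ}
variable {K : Type} [DistribLattice K] [BoundedOrder K]

/-- Atoms over `Fin (m+1)` that mention the new element `Fin.last m`. -/
def NewAtomT (R : Type) (ar : R → ℕ) (m : ℕ) : Type :=
  {t : Atoms R ar (Fin (m+1)) // ∃ j, t.2 j = Fin.last m}

noncomputable instance {m : ℕ} : Fintype (NewAtomT R ar m) := by
  classical exact Subtype.fintype _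

/-- The instantiation of a new atom at the tuple `(a, b)`. -/
def instAtomF {m n : ℕ} (a : Fin m → Fin n) (b : Fin n) (t : NewAtomT R ar m) :
    Atoms R ar (Fin n) :=
  ⟨t.1.1, fun j => (Fin.snoc a b : Fin (m+1) → Fin n) (t.1.2 j)⟩

/-- Target value sets for new atoms: first `Bool` is the mode (max/small),
second is the sign of the atom. -/
def pattSet (K : Type) [DistribLattice K] [BoundedOrder K] (δ : K) : Bool → Bool → Set (K × K)
  | true, true => {(⊤ : K)} ×ˢ {(⊥ : K)}
  | true, false => {(⊥ : K)} ×ˢ {(⊤ : K)}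
  | false, true => (Set.Ioc ⊥ δ) ×ˢ {(⊥ : K)}
  | false, false => {(⊥ : K)} ×ˢ (Set.Ioc ⊥ δ)

/-- The failure event: no witness `b` outside the range of `a` has all its new atoms
with values in the prescribed sets. -/
def FailSet {m n : ℕ} (a : Fin m → Fin n) (S : NewAtomT R ar m → Set (K × K)) :
    Set (Atoms R ar (Fin n) → K × K) :=
  {ω | ∀ b : {b : Fin n // b ∉ Set.range a}, ∃ t : NewAtomT R ar m,
    ω (instAtomF a b.1 t) ∉ S t}

lemma snoc_inj {m n : ℕ} {a : Fin m → Fin n} (ha : Function.Injective a) {b : Fin n}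
    (hb : b ∉ Set.range a) : Function.Injective (Fin.snoc a b : Fin (m+1) → Fin n) := by
  intro x y h
  rcases Fin.eq_castSucc_or_eq_last x with ⟨x', rfl⟩ | rfl <;>
    rcases Fin.eq_castSucc_or_eq_last y with ⟨y', rfl⟩ | rfl
  · rw [Fin.snoc_castSucc, Fin.snoc_castSucc] at h
    exact congrArg Fin.castSucc (ha h)
  · rw [Fin.snoc_castSucc, Fin.snoc_last] at h
    exact absurd ⟨x', h⟩ hb
  · rw [Fin.snoc_last, Fin.snoc_castSucc] at h
    exact absurd ⟨y', h.symm⟩ hb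
  · rfl

lemma instAtomF_inj {m n : ℕ} {a : Fin m → Fin n} (ha : Function.Injective a)
    {b b' : Fin n} (hb : b ∉ Set.range a) (hb' : b' ∉ Set.range a)
    {t t' : NewAtomT R ar m} (h : instAtomF a b t = instAtomF a b' t') :
    b = b' ∧ t = t' := by
  obtain ⟨⟨r, f⟩, hnew⟩ := t
  obtain ⟨⟨r', f'⟩, hnew'⟩ := t'
  dsimp only [instAtomF] at h
  obtain ⟨hr, hargs⟩ := Sigma.mk.inj_iff.mp h
  subst hr
  have hfun : (fun j => (Fin.snoc a b : Fin (m+1) → Fin n) (f j))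
      = fun j => (Fin.snoc a b' : Fin (m+1) → Fin n) (f' j) := eq_of_heq hargs
  obtain ⟨j0, hj0⟩ := hnew
  dsimp only at hj0
  have hbb' : b = b' := by
    have h1 := congrFun hfun j0
    rw [hj0, Fin.snoc_last] at h1
    rcases Fin.eq_castSucc_or_eq_last (f' j0) with ⟨y, hy⟩ | hy
    · rw [hy, Fin.snoc_castSucc] at h1
      exact absurd ⟨y, h1.symm⟩ hb
    · rw [hy, Fin.snoc_last] at h1; exact h1
  subst hbb'
  refine ⟨rfl, ?_⟩
  have hf : f = f' := by
    funext j
    exact snoc_inj ha hb (congrFun hfun j)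
  subst hf
  rfl

lemma typeOf_snoc_old {n m : ℕ} (ω : Atoms R ar (Fin n) → K × K) (a : Fin m → Fin n)
    (b : Fin n) (l : Lit R ar (Fin (m+1))) (hold : ∀ j, l.args j ≠ Fin.last m) :
    typeOf (interpOf ω) (Fin.snoc a b) l
      = typeOf (interpOf ω) a ⟨l.rel, fun j => (l.args j).castPred (hold j), l.pos⟩ := by
  show interpOf ω (⟨l.rel, fun j => (Fin.snoc a b : Fin (m+1) → Fin n) (l.args j), l.pos⟩ :
      Lit R ar (Fin n))
      = interpOf ω ⟨l.rel, fun j => a ((l.args j).castPred (hold j)), l.pos⟩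
  refine congrArg (fun g => interpOf ω ⟨l.rel, g, l.pos⟩) (funext fun j => ?_)
  conv_lhs => rw [← Fin.castSucc_castPred (l.args j) (hold j)]
  rw [Fin.snoc_castSucc]

lemma oldLit_map_castSucc {m : ℕ} (l : Lit R ar (Fin (m+1)))
    (hold : ∀ j, l.args j ≠ Fin.last m) :
    Lit.map Fin.castSucc (⟨l.rel, fun j => (l.args j).castPred (hold j), l.pos⟩ :
      Lit R ar (Fin m)) = l := by
  show (⟨l.rel, fun j => Fin.castSucc ((l.args j).castPred (hold j)), l.pos⟩ :
    Lit R ar (Fin (m+1))) = (⟨l.rel, l.args, l.pos⟩ : Lit R ar (Fin (m+1)))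
  exact congrArg (fun g => (⟨l.rel, g, l.pos⟩ : Lit R ar (Fin (m+1))))
    (funext fun j => Fin.castSucc_castPred _ _)

lemma typeOf_snoc_castSucc {n m : ℕ} (ω : Atoms R ar (Fin n) → K × K) (a : Fin m → Fin n)
    (b : Fin n) (l : Lit R ar (Fin m)) :
    typeOf (interpOf ω) (Fin.snoc a b) (l.map Fin.castSucc) = typeOf (interpOf ω) a l := by
  show interpOf ω (⟨l.rel, fun j =>
        (Fin.snoc a b : Fin (m+1) → Fin n) (Fin.castSucc (l.args j)), l.pos⟩ :
      Lit R ar (Fin n)) = interpOf ω ⟨l.rel, fun j => a (l.args j), l.pos⟩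
  exact congrArg (fun g => interpOf ω ⟨l.rel, g, l.pos⟩)
    (funext fun j => Fin.snoc_castSucc _ _ _)

section Meas
variable [MeasurableSpace K]

lemma atomMeasure_prob (p : Measure K) [IsProbabilityMeasure p] :
    IsProbabilityMeasure (atomMeasure (⊥ : K) p) := by
  constructor
  rw [atomMeasure, Measure.smul_apply, Measure.add_apply,
    Measure.map_apply measurable_prodMk_right MeasurableSet.univ,
    Measure.map_apply measurable_prodMk_left MeasurableSet.univ]
  simp only [Set.preimage_univ, measure_univ, smul_eq_mul]
  rw [← two_mul, mul_one]
  exact ENNReal.inv_mul_cancel two_ne_zero ENNReal.ofNat_ne_top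

lemma atomMeasure_prod_left (p : Measure K) (s : Set K)
    (hs : MeasurableSet s) (hbm : MeasurableSet {(⊥ : K)}) (h0 : (⊥ : K) ∉ s) :
    atomMeasure (⊥ : K) p (s ×ˢ {(⊥ : K)}) = 2⁻¹ * p s := by
  rw [atomMeasure, Measure.smul_apply, Measure.add_apply,
    Measure.map_apply measurable_prodMk_right (hs.prod hbm),
    Measure.map_apply measurable_prodMk_left (hs.prod hbm)]
  have h1 : (fun j : K => (j, (⊥ : K))) ⁻¹' (s ×ˢ {(⊥ : K)}) = s := by
    ext j; simp
  have h2 : (fun j : K => ((⊥ : K), j)) ⁻¹' (s ×ˢ {(⊥ : K)}) = ∅ := by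
    ext j
    simp only [Set.mem_preimage, Set.mem_prod, Set.mem_singleton_iff,
      Set.mem_empty_iff_false, iff_false]
    rintro ⟨hc, -⟩; exact h0 hc
  rw [h1, h2]
  simp [smul_eq_mul]

lemma atomMeasure_prod_right (p : Measure K) (s : Set K)
    (hs : MeasurableSet s) (hbm : MeasurableSet {(⊥ : K)}) (h0 : (⊥ : K) ∉ s) :
    atomMeasure (⊥ : K) p ({(⊥ : K)} ×ˢ s) = 2⁻¹ * p s := by
  rw [atomMeasure, Measure.smul_apply, Measure.add_apply,
    Measure.map_apply measurable_prodMk_right (hbm.prod hs),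
    Measure.map_apply measurable_prodMk_left (hbm.prod hs)]
  have h1 : (fun j : K => (j, (⊥ : K))) ⁻¹' ({(⊥ : K)} ×ˢ s) = ∅ := by
    ext j
    simp only [Set.mem_preimage, Set.mem_prod, Set.mem_singleton_iff,
      Set.mem_empty_iff_false, iff_false]
    rintro ⟨-, hc⟩; exact h0 hc
  have h2 : (fun j : K => ((⊥ : K), j)) ⁻¹' ({(⊥ : K)} ×ˢ s) = s := by
    ext j; simp
  rw [h1, h2]
  simp [smul_eq_mul]

lemma failSet_measure (p : Measure K) [IsProbabilityMeasure p] {n m : ℕ}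
    {a : Fin m → Fin n} (ha : Function.Injective a)
    (S : NewAtomT R ar m → Set (K × K)) (hS : ∀ t, MeasurableSet (S t)) :
    muI (ar := ar) (⊥ : K) p n (FailSet a S)
      = (1 - ∏ t, atomMeasure (⊥ : K) p (S t)) ^
          Nat.card {b : Fin n // b ∉ Set.range a} := by
  classical
  haveI := atomMeasure_prob p
  rw [Nat.card_eq_fintype_card, muI]
  exact pi_forall_exists_measure (atomMeasure (⊥ : K) p)
    (fun (b : {b : Fin n // b ∉ Set.range a}) t => instAtomF a b.1 t)
    (fun b t b' t' h => by
      obtain ⟨h1, h2⟩ := instAtomF_inj ha b.2 b'.2 h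
      exact ⟨Subtype.ext h1, h2⟩) S hS

end Meas

lemma card_compl_range {n m : ℕ} (a : Fin m → Fin n) :
    n - m ≤ Nat.card {b : Fin n // b ∉ Set.range a} := by
  classical
  rw [Nat.card_eq_fintype_card]
  have h1 : Fintype.card {b : Fin n // b ∈ Set.range a} ≤ m := by
    have hsurj : Function.Surjective
        (fun i : Fin m => (⟨a i, ⟨i, rfl⟩⟩ : {b : Fin n // b ∈ Set.range a})) := by
      rintro ⟨b, i, rfl⟩; exact ⟨i, rfl⟩
    simpa using Fintype.card_le_of_surjective _ hsurj
  have h2 : Fintype.card {b : Fin n // b ∉ Set.range a}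
      = n - Fintype.card {b : Fin n // b ∈ Set.range a} := by
    simpa using Fintype.card_subtype_compl (fun b : Fin n => b ∈ Set.range a)
  omega


lemma bad_subset {n k : ℕ} (δ : K) (hbt : (⊥ : K) ≠ ⊤) :
    {ω : Atoms R ar (Fin n) → K × K | ¬ ExtPropKD (interpOf ω) k δ} ⊆
      ⋃ (i : Σ m : Fin k, {a : Fin m.1 → Fin n // Function.Injective a} ×
          ((NewAtomT R ar m.1 → Bool) × Bool)),
        FailSet i.2.1.1 (fun t => pattSet K δ i.2.2.2 (i.2.2.1 t)) := by
  classical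
  intro ω hω
  rw [mem_setOf_eq] at hω
  simp only [ExtPropKD, not_forall, Classical.not_imp] at hω
  obtain ⟨m, hm, a, ha, ρp, hMD, hMX, hbad⟩ := hω
  set s : NewAtomT R ar m → Bool :=
    fun t => if ρp ⟨t.1.1, t.1.2, true⟩ = ⊤ then true else false with hs_def
  have hvals : ∀ t : NewAtomT R ar m,
      (s t = true ∧ ρp ⟨t.1.1, t.1.2, true⟩ = ⊤ ∧ ρp ⟨t.1.1, t.1.2, false⟩ = ⊥) ∨
      (s t = false ∧ ρp ⟨t.1.1, t.1.2, true⟩ = ⊥ ∧ ρp ⟨t.1.1, t.1.2, false⟩ = ⊤) := by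
    intro t
    have hpos := hMX.2 ⟨t.1.1, t.1.2, true⟩ t.2
    have hneg := hMX.2 ⟨t.1.1, t.1.2, false⟩ t.2
    have hmd := hMD t.1.1 t.1.2
    rcases hpos with hp | hp
    · have hne := hmd.mp hp
      have hn : ρp ⟨t.1.1, t.1.2, false⟩ = ⊤ := hneg.resolve_left hne
      right
      refine ⟨?_, hp, hn⟩
      simp only [hs_def, if_neg (hp ▸ hbt : ρp ⟨t.1.1, t.1.2, true⟩ ≠ ⊤)]
    · left
      have hn : ρp ⟨t.1.1, t.1.2, false⟩ = ⊥ := by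
        by_contra hne
        have hpb := hmd.mpr hne
        rw [hp] at hpb
        exact hbt hpb.symm
      exact ⟨by simp only [hs_def, if_pos hp], hp, hn⟩
  have hnv1 : ∀ (b : Fin n) (t : NewAtomT R ar m),
      typeOf (interpOf ω) (Fin.snoc a b) ⟨t.1.1, t.1.2, true⟩
        = (ω (instAtomF a b t)).1 := fun _ _ => rfl
  have hnv2 : ∀ (b : Fin n) (t : NewAtomT R ar m),
      typeOf (interpOf ω) (Fin.snoc a b) ⟨t.1.1, t.1.2, false⟩
        = (ω (instAtomF a b t)).2 := fun _ _ => rfl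
  have hold : ∀ (b : Fin n) (l : Lit R ar (Fin (m+1))) (h : ∀ j, l.args j ≠ Fin.last m),
      typeOf (interpOf ω) (Fin.snoc a b) l = ρp l := by
    intro b l h
    rw [typeOf_snoc_old ω a b l h]
    conv_rhs => rw [← oldLit_map_castSucc l h]
    exact (hMX.1 _).symm
  have claimA : ∀ b : Fin n, b ∉ Set.range a →
      (∀ t : NewAtomT R ar m, ω (instAtomF a b t) ∈ pattSet K δ true (s t)) →
      typeOf (interpOf ω) (Fin.snoc a b) = ρp := by
    intro b hb hmatch
    funext l
    by_cases hnew : ∃ j, l.args j = Fin.last m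
    · set t : NewAtomT R ar m := ⟨⟨l.rel, l.args⟩, hnew⟩ with ht_def
      have hl : l = ⟨t.1.1, t.1.2, l.pos⟩ := rfl
      have hmem := hmatch t
      rcases hvals t with ⟨hst, hpos, hneg⟩ | ⟨hst, hpos, hneg⟩ <;> rw [hst] at hmem <;>
        simp only [pattSet, Set.mem_prod, Set.mem_singleton_iff] at hmem <;>
        rw [hl] <;> cases hpol : l.pos
      · rw [hnv2 b t, hneg, hmem.2]
      · rw [hnv1 b t, hpos, hmem.1]
      · rw [hnv2 b t, hneg, hmem.2]
      · rw [hnv1 b t, hpos, hmem.1]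
    · push_neg at hnew
      exact hold b l hnew
  have claimB : ∀ c : Fin n, c ∉ Set.range a →
      (∀ t : NewAtomT R ar m, ω (instAtomF a c t) ∈ pattSet K δ false (s t)) →
      ModelDefining ⊥ (typeOf (interpOf ω) (Fin.snoc a c)) ∧
        typeOf (interpOf ω) (Fin.snoc a c) ≤ ρp ∧
        SmallExt δ (typeOf (interpOf ω) (Fin.snoc a c)) (typeOf (interpOf ω) a) := by
    intro c hc hmatch
    have hv : ∀ t : NewAtomT R ar m,
        (s t = true ∧ (ω (instAtomF a c t)).1 ∈ Set.Ioc (⊥ : K) δ ∧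
          (ω (instAtomF a c t)).2 = ⊥) ∨
        (s t = false ∧ (ω (instAtomF a c t)).1 = ⊥ ∧
          (ω (instAtomF a c t)).2 ∈ Set.Ioc (⊥ : K) δ) := by
      intro t
      have hmem := hmatch t
      cases hst : s t
      · right
        rw [hst] at hmem
        simp only [pattSet, Set.mem_prod, Set.mem_singleton_iff] at hmem
        exact ⟨rfl, hmem.1, hmem.2⟩
      · left
        rw [hst] at hmem
        simp only [pattSet, Set.mem_prod, Set.mem_singleton_iff] at hmem
        exact ⟨rfl, hmem.1, hmem.2⟩
    refine ⟨?_, ?_, ?_, ?_⟩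
    · intro r as
      by_cases hnew : ∃ j, as j = Fin.last m
      · set t : NewAtomT R ar m := ⟨⟨r, as⟩, hnew⟩ with ht_def
        show (ω (instAtomF a c t)).1 = ⊥ ↔ (ω (instAtomF a c t)).2 ≠ ⊥
        rcases hv t with ⟨hst, h1, h2⟩ | ⟨hst, h1, h2⟩
        · exact iff_of_false h1.1.ne' (by simp [h2])
        · exact iff_of_true h1 h2.1.ne'
      · push_neg at hnew
        rw [hold c ⟨r, as, true⟩ hnew, hold c ⟨r, as, false⟩ hnew]
        exact hMD r as
    · intro l
      by_cases hnew : ∃ j, l.args j = Fin.last m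
      · set t : NewAtomT R ar m := ⟨⟨l.rel, l.args⟩, hnew⟩ with ht_def
        have hl : l = ⟨t.1.1, t.1.2, l.pos⟩ := rfl
        rcases hv t with ⟨hst, h1, h2⟩ | ⟨hst, h1, h2⟩ <;>
          rcases hvals t with ⟨hst', hpos, hneg⟩ | ⟨hst', hpos, hneg⟩ <;>
          [skip; (rw [hst] at hst'; exact absurd hst' (by simp));
           (rw [hst] at hst'; exact absurd hst' (by simp)); skip] <;>
          rw [hl] <;> cases hpol : l.pos
        · rw [hnv2 c t, hneg]; exact h2.le
        · rw [hnv1 c t, hpos]; exact le_top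
        · rw [hnv2 c t, hneg]; exact le_top
        · rw [hnv1 c t, hpos]; exact h1.le
      · push_neg at hnew
        exact (hold c l hnew).le
    · intro l
      exact typeOf_snoc_castSucc ω a c l
    · intro l hl
      set t : NewAtomT R ar m := ⟨⟨l.rel, l.args⟩, hl⟩ with ht_def
      have hll : l = ⟨t.1.1, t.1.2, l.pos⟩ := rfl
      rcases hv t with ⟨hst, h1, h2⟩ | ⟨hst, h1, h2⟩ <;> rw [hll] <;> cases hpol : l.pos
      · rw [hnv2 c t]; exact h2.trans_le bot_le
      · rw [hnv1 c t]; exact h1.2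
      · rw [hnv2 c t]; exact h2.2
      · rw [hnv1 c t]; exact h1.trans_le bot_le
  rcases not_and_or.mp hbad with hA | hB
  · refine mem_iUnion.2 ⟨⟨⟨m, hm⟩, ⟨a, ha⟩, s, true⟩, ?_⟩
    intro b
    by_contra hcon
    push_neg at hcon
    exact hA ⟨b.1, b.2, claimA b.1 b.2 hcon⟩
  · refine mem_iUnion.2 ⟨⟨⟨m, hm⟩, ⟨a, ha⟩, s, false⟩, ?_⟩
    intro b
    by_contra hcon
    push_neg at hcon
    obtain ⟨hMD2, hle, hsm⟩ := claimB b.1 b.2 hcon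
    exact hB ⟨b.1, b.2, hMD2, hle, hsm⟩


end Domain

/-- Let `K` be an infinite lattice semiring with an `ε`-bounded
probability measure `p` on `K⁺` (whose σ-algebra contains all order intervals, and
with `p[x = 1] > 0`).  Then for every fixed `k` and every `p`-relevant `δ`, random
`K`-interpretations on `[n]` have the `(k,δ)`-extension property with probability
converging to 1 exponentially fast. -/
theorem statement_3
    {R : Type} [Fintype R] [DecidableEq R] {ar : R → ℕ}
    {K : Type} [DistribLattice K] [BoundedOrder K] [Infinite K]
    [MeasurableSpace K] (hInt : ∀ a b : K, MeasurableSet (Set.Icc a b))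
    (p : Measure K) [IsProbabilityMeasure p]
    (hp0 : p {(⊥ : K)} = 0) (hp1 : 0 < p {(⊤ : K)})
    (ε : K) (hε : EpsBounded p ε)
    (k : ℕ) (δ : K) (hδ : PRelevant p ε δ) :
    ExpConv (fun n =>
      muI (ar := ar) (⊥ : K) p n {ω | ExtPropKD (interpOf ω) k δ}) 1 := by
  classical
  have hbt : (⊥ : K) ≠ ⊤ := bot_ne_top
  have hsing : ∀ x : K, MeasurableSet {x} := fun x => by simpa using hInt x x
  have hIocM : MeasurableSet (Set.Ioc (⊥ : K) δ) := by
    have hIoc_eq : Set.Ioc (⊥ : K) δ = Set.Icc ⊥ δ \ {⊥} := by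
      ext x
      simp only [Set.mem_Ioc, Set.mem_diff, Set.mem_Icc, Set.mem_singleton_iff,
        bot_lt_iff_ne_bot]
      constructor
      · rintro ⟨h1, h2⟩; exact ⟨⟨bot_le, h2⟩, h1⟩
      · rintro ⟨⟨-, h2⟩, h1⟩; exact ⟨h1, h2⟩
    rw [hIoc_eq]
    exact (hInt ⊥ δ).diff (hsing ⊥)
  haveI hνp : IsProbabilityMeasure (atomMeasure (⊥ : K) p) := atomMeasure_prob p
  set ν : Measure (K × K) := atomMeasure (⊥ : K) p with hν_def
  -- positivity of the relevant measures
  have hδpos : 0 < p (Set.Ioc (⊥ : K) δ) := by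
    obtain ⟨hδbot, hcase⟩ := hδ
    have hIoc_set : {x : K | ⊥ < x ∧ x ≤ δ} = Set.Ioc (⊥ : K) δ := rfl
    rcases hcase with hlt | ⟨hpε, rfl⟩
    · rcases hε with hw | hstr
      · obtain ⟨hpε, -⟩ := hw
        have hεbot : ε ≠ ⊥ := by
          intro h; rw [h] at hpε; rw [hp0] at hpε; exact lt_irrefl 0 hpε
        refine lt_of_lt_of_le hpε (measure_mono ?_)
        intro x hx
        rw [Set.mem_singleton_iff] at hx
        subst hx
        exact ⟨bot_lt_iff_ne_bot.2 hεbot, hlt.le⟩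
      · have := hstr.2.2 δ hlt
        rwa [hIoc_set] at this
    · refine lt_of_lt_of_le hpε (measure_mono ?_)
      intro x hx
      rw [Set.mem_singleton_iff] at hx
      subst hx
      exact ⟨bot_lt_iff_ne_bot.2 hδbot, le_rfl⟩
  set α0 : ℝ≥0∞ := min (2⁻¹ * p {(⊤ : K)}) (2⁻¹ * p (Set.Ioc (⊥ : K) δ)) with hα0_def
  have hα0pos : 0 < α0 := by
    apply lt_min
    · exact ENNReal.mul_pos (by simp) hp1.ne'
    · exact ENNReal.mul_pos (by simp) hδpos.ne'
  have hα0le1 : α0 ≤ 1 := by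
    refine (min_le_left _ _).trans ?_
    calc 2⁻¹ * p {(⊤ : K)} ≤ 2⁻¹ * 1 := mul_le_mul_right prob_le_one _
    _ ≤ 1 := by simp [ENNReal.inv_le_one]
  have hν_patt : ∀ mode bl : Bool, α0 ≤ ν (pattSet K δ mode bl) := by
    intro mode bl
    have hbot_top : (⊥ : K) ∉ ({⊤} : Set K) := by simp [hbt]
    have hbot_Ioc : (⊥ : K) ∉ Set.Ioc (⊥ : K) δ := fun h => lt_irrefl _ h.1
    cases mode <;> cases bl <;> simp only [pattSet, hν_def]
    · rw [atomMeasure_prod_right p _ hIocM (hsing ⊥) hbot_Ioc]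
      exact min_le_right _ _
    · rw [atomMeasure_prod_left p _ hIocM (hsing ⊥) hbot_Ioc]
      exact min_le_right _ _
    · rw [atomMeasure_prod_right p _ (hsing ⊤) (hsing ⊥) hbot_top]
      exact min_le_left _ _
    · rw [atomMeasure_prod_left p _ (hsing ⊤) (hsing ⊥) hbot_top]
      exact min_le_left _ _
  have hpatt_meas : ∀ mode bl : Bool, MeasurableSet (pattSet K δ mode bl) := by
    intro mode bl
    cases mode <;> cases bl <;> simp only [pattSet]
    · exact (hsing ⊥).prod hIocM
    · exact hIocM.prod (hsing ⊥)
    · exact (hsing ⊥).prod (hsing ⊤)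
    · exact (hsing ⊤).prod (hsing ⊥)
  set M : ℕ := Finset.univ.sup (fun m : Fin k => Fintype.card (NewAtomT R ar m.1)) with hM_def
  set r : ℝ≥0∞ := 1 - α0 ^ M with hr_def
  have hr1 : r < 1 :=
    ENNReal.sub_lt_self ENNReal.one_ne_top one_ne_zero (pow_ne_zero M hα0pos.ne')
  have hrle1 : r ≤ 1 := tsub_le_self
  set D : ℕ := ∑ m : Fin k, 2 ^ (Fintype.card (NewAtomT R ar m.1) + 1) with hD_def
  obtain ⟨C, q, hCtop, hC1, hq1, hbound⟩ :=
    exists_geom_bound (D : ℝ≥0∞) (ENNReal.natCast_ne_top D) r hr1 k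
  -- the key bound on the bad event
  have hbad_le : ∀ n : ℕ,
      muI (ar := ar) (⊥ : K) p n {ω | ¬ ExtPropKD (interpOf ω) k δ} ≤ C * q ^ n := by
    intro n
    haveI : IsProbabilityMeasure (muI (ar := ar) (⊥ : K) p n) := by
      rw [muI]; infer_instance
    rcases Nat.eq_zero_or_pos n with rfl | hn
    · rw [pow_zero, mul_one]
      exact prob_le_one.trans hC1
    -- n ≥ 1
    have hfail : ∀ (i : Σ m : Fin k, {a : Fin m.1 → Fin n // Function.Injective a} ×
        ((NewAtomT R ar m.1 → Bool) × Bool)),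
        muI (ar := ar) (⊥ : K) p n
          (FailSet i.2.1.1 (fun t => pattSet K δ i.2.2.2 (i.2.2.1 t))) ≤ r ^ (n - k) := by
      rintro ⟨m, a, s, mode⟩
      rw [failSet_measure p a.2 _ (fun t => hpatt_meas mode (s t))]
      have hprod : α0 ^ M ≤ ∏ t : NewAtomT R ar m.1, ν (pattSet K δ mode (s t)) := by
        calc α0 ^ M ≤ α0 ^ (Fintype.card (NewAtomT R ar m.1)) :=
              pow_le_pow_right_of_le_one' hα0le1 (Finset.le_sup (f := fun m : Fin k => Fintype.card (NewAtomT R ar m.1)) (Finset.mem_univ m))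
        _ = ∏ _t : NewAtomT R ar m.1, α0 := by
              rw [Finset.prod_const, Finset.card_univ]
        _ ≤ ∏ t : NewAtomT R ar m.1, ν (pattSet K δ mode (s t)) :=
              Finset.prod_le_prod' fun t _ => hν_patt mode (s t)
      have h1 : 1 - ∏ t : NewAtomT R ar m.1, ν (pattSet K δ mode (s t)) ≤ r :=
        tsub_le_tsub_left hprod 1
      have hcard : n - k ≤ Nat.card {b : Fin n // b ∉ Set.range a.1} := by
        have := card_compl_range a.1
        have hmk : m.1 ≤ k := m.2.le
        omega
      calc (1 - ∏ t : NewAtomT R ar m.1, ν (pattSet K δ mode (s t))) ^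
            Nat.card {b : Fin n // b ∉ Set.range a.1}
          ≤ r ^ Nat.card {b : Fin n // b ∉ Set.range a.1} := pow_le_pow_left' h1 _
        _ ≤ r ^ (n - k) := pow_le_pow_right_of_le_one' hrle1 hcard
    calc muI (ar := ar) (⊥ : K) p n {ω | ¬ ExtPropKD (interpOf ω) k δ}
        ≤ muI (ar := ar) (⊥ : K) p n
            (⋃ (i : Σ m : Fin k, {a : Fin m.1 → Fin n // Function.Injective a} ×
              ((NewAtomT R ar m.1 → Bool) × Bool)),
              FailSet i.2.1.1 (fun t => pattSet K δ i.2.2.2 (i.2.2.1 t))) :=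
          measure_mono (bad_subset δ hbt)
      _ ≤ ∑' (i : Σ m : Fin k, {a : Fin m.1 → Fin n // Function.Injective a} ×
              ((NewAtomT R ar m.1 → Bool) × Bool)),
            muI (ar := ar) (⊥ : K) p n
              (FailSet i.2.1.1 (fun t => pattSet K δ i.2.2.2 (i.2.2.1 t))) :=
          measure_iUnion_le _
      _ ≤ ∑' (i : Σ m : Fin k, {a : Fin m.1 → Fin n // Function.Injective a} ×
              ((NewAtomT R ar m.1 → Bool) × Bool)), r ^ (n - k) :=
          ENNReal.tsum_le_tsum hfail
      _ = (Fintype.card (Σ m : Fin k, {a : Fin m.1 → Fin n // Function.Injective a} ×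
              ((NewAtomT R ar m.1 → Bool) × Bool)) : ℝ≥0∞) * r ^ (n - k) := by
          rw [tsum_fintype, Finset.sum_const, Finset.card_univ, nsmul_eq_mul]
      _ ≤ (D : ℝ≥0∞) * (n : ℝ≥0∞) ^ k * r ^ (n - k) := by
          refine mul_le_mul_left ?_ _
          have hcard_le : Fintype.card (Σ m : Fin k,
              {a : Fin m.1 → Fin n // Function.Injective a} ×
              ((NewAtomT R ar m.1 → Bool) × Bool)) ≤ D * n ^ k := by
            rw [Fintype.card_sigma, hD_def, Finset.sum_mul]
            refine Finset.sum_le_sum fun m _ => ?_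
            rw [Fintype.card_prod, Fintype.card_prod, Fintype.card_fun,
              Fintype.card_bool]
            have h1 : Fintype.card {a : Fin m.1 → Fin n // Function.Injective a}
                ≤ n ^ k := by
              calc Fintype.card {a : Fin m.1 → Fin n // Function.Injective a}
                  ≤ Fintype.card (Fin m.1 → Fin n) := Fintype.card_subtype_le _
                _ = n ^ m.1 := by rw [Fintype.card_fun, Fintype.card_fin, Fintype.card_fin]
                _ ≤ n ^ k := Nat.pow_le_pow_right hn m.2.le
            calc Fintype.card {a : Fin m.1 → Fin n // Function.Injective a} *
                  (2 ^ Fintype.card (NewAtomT R ar m.1) * 2)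
                ≤ n ^ k * (2 ^ Fintype.card (NewAtomT R ar m.1) * 2) :=
                  Nat.mul_le_mul_right _ h1
              _ = 2 ^ (Fintype.card (NewAtomT R ar m.1) + 1) * n ^ k := by ring
          calc (Fintype.card (Σ m : Fin k,
              {a : Fin m.1 → Fin n // Function.Injective a} ×
              ((NewAtomT R ar m.1 → Bool) × Bool)) : ℝ≥0∞) ≤ ((D * n ^ k : ℕ) : ℝ≥0∞) :=
                Nat.cast_le.2 hcard_le
            _ = (D : ℝ≥0∞) * (n : ℝ≥0∞) ^ k := by push_cast; ring
      _ ≤ C * q ^ n := hbound n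
  -- conclude
  refine ⟨C, q, hCtop, hq1, fun n => ?_⟩
  haveI : IsProbabilityMeasure (muI (ar := ar) (⊥ : K) p n) := by
    rw [muI]; infer_instance
  constructor
  · exact prob_le_one.trans (le_add_right le_rfl)
  · have hcompl : {ω : Atoms R ar (Fin n) → K × K | ExtPropKD (interpOf ω) k δ}ᶜ
        = {ω | ¬ ExtPropKD (interpOf ω) k δ} := by
      ext ω; simp
    calc (1 : ℝ≥0∞)
        = muI (ar := ar) (⊥ : K) p n Set.univ := measure_univ.symm
      _ = muI (ar := ar) (⊥ : K) p n
            ({ω | ExtPropKD (interpOf ω) k δ} ∪ {ω | ExtPropKD (interpOf ω) k δ}ᶜ) := by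
          rw [Set.union_compl_self]
      _ ≤ muI (ar := ar) (⊥ : K) p n {ω | ExtPropKD (interpOf ω) k δ} +
            muI (ar := ar) (⊥ : K) p n {ω | ExtPropKD (interpOf ω) k δ}ᶜ :=
          measure_union_le _ _
      _ ≤ muI (ar := ar) (⊥ : K) p n {ω | ExtPropKD (interpOf ω) k δ} + C * q ^ n := by
          rw [hcompl]
          exact add_le_add_right (hbad_le n) _
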